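/- Let X, T, B7 be the vector fields on ℝ³ (coordinates (x,t,u)) given by X(x,t,u)=(1,0,0), T(x,t,u)=(0,1,0), B7(x,t,u)=(x+t, 2t, 1+u), and set h1 := X, h2 := T+X, h3 := B7. Then, at every point of ℝ³, [h1,h3]=h1, [h2,h3]=2·h2 and [h1,h2]=0. (This exhibits the isomorphism of the symmetry Lie algebra of the case g(u)=u/(1+u) with that of the case g(u)=u^p: both have a basis e1,e2,e3 with [e1,e3]=e1, [e2,e3]=2e2 and all other brackets zero.) -/
import Mathlib

noncomputable def Lmap : (ℝ × ℝ × ℝ) →L[ℝ] (ℝ × ℝ × ℝ) :=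
  ((ContinuousLinearMap.fst ℝ ℝ (ℝ × ℝ)) +
    (ContinuousLinearMap.fst ℝ ℝ ℝ).comp (ContinuousLinearMap.snd ℝ ℝ (ℝ × ℝ))).prod
  ((((2:ℝ) • (ContinuousLinearMap.fst ℝ ℝ ℝ).comp (ContinuousLinearMap.snd ℝ ℝ (ℝ × ℝ)))).prod
    ((ContinuousLinearMap.snd ℝ ℝ ℝ).comp (ContinuousLinearMap.snd ℝ ℝ (ℝ × ℝ))))

lemma Lmap_apply (q : ℝ × ℝ × ℝ) : Lmap q = (q.1 + q.2.1, 2 * q.2.1, q.2.2) := by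
  simp [Lmap, smul_eq_mul]

lemma fderiv_B7 (q : ℝ × ℝ × ℝ) :
    fderiv ℝ (fun q : ℝ × ℝ × ℝ => (q.1 + q.2.1, 2 * q.2.1, 1 + q.2.2)) q = Lmap := by
  have hfun : (fun q : ℝ × ℝ × ℝ => (q.1 + q.2.1, 2 * q.2.1, 1 + q.2.2)) =
      fun q => Lmap q + ((0, 0, 1) : ℝ × ℝ × ℝ) := by
    funext p
    simp [Lmap_apply, Prod.ext_iff]
    ring
  rw [hfun]
  exact ((Lmap.hasFDerivAt).add_const _).fderiv

theorem burgers_lie_algebra_g7_normal_form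
    (X T B7 : ℝ × ℝ × ℝ → ℝ × ℝ × ℝ)
    (hX : X = fun _ => (1, 0, 0))
    (hT : T = fun _ => (0, 1, 0))
    (hB7 : B7 = fun q => (q.1 + q.2.1, 2 * q.2.1, 1 + q.2.2))
    (h1 h2 h3 : ℝ × ℝ × ℝ → ℝ × ℝ × ℝ)
    (hh1 : h1 = X) (hh2 : h2 = T + X) (hh3 : h3 = B7) :
    ∀ q : ℝ × ℝ × ℝ,
      VectorField.lieBracket ℝ h1 h3 q = h1 q ∧
      VectorField.lieBracket ℝ h2 h3 q = (2 : ℝ) • h2 q ∧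
      VectorField.lieBracket ℝ h1 h2 q = 0 := by
  subst hX hT hB7 hh1 hh2 hh3
  intro q
  have key : ((fun _ : ℝ × ℝ × ℝ => ((0:ℝ), (1:ℝ), (0:ℝ))) +
      (fun _ : ℝ × ℝ × ℝ => ((1:ℝ), (0:ℝ), (0:ℝ)))) =
      fun _ : ℝ × ℝ × ℝ => ((1:ℝ), (1:ℝ), (0:ℝ)) := by
    funext p; simp [Prod.ext_iff]
  rw [key]
  refine ⟨?_, ?_, ?_⟩ <;>
    simp [VectorField.lieBracket, fderiv_B7, fderiv_const_apply, Lmap_apply, Prod.ext_iff,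
      Prod.smul_def, smul_eq_mul] <;> ring
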